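/- arXiv:2007.12962 — 2 statements merged into one kernel-verified Lean document; each statement's English description precedes it below -/
import Mathlib

section
/- Let f : ℝ → ℂ be such that φ ↦ f((1/2)tan(φ/2)) has an absolutely convergent Fourier series on (-π, π) and f(x) ≠ 0 for all x ∈ ℝ. Then φ ↦ 1/f((1/2)tan(φ/2)) also has an absolutely convergent Fourier series (Wiener's lemma applied in this setting). -/
open Complex
namespace Wiener
noncomputable section



/-- convolution of two ℤ-sequences -/
def conv (a b : ℤ → ℂ) (n : ℤ) : ℂ := ∑' k : ℤ, a k * b (n - k)

/-- reindexing (n,k) ↦ (k, n-k) -/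
def reidx : ℤ × ℤ ≃ ℤ × ℤ where
  toFun p := (p.2, p.1 - p.2)
  invFun p := (p.1 + p.2, p.1)
  left_inv p := by simp
  right_inv p := by simp [add_sub_cancel_left]

theorem summable_conv_norm {a b : ℤ → ℂ} (ha : Summable fun n => ‖a n‖)
    (hb : Summable fun n => ‖b n‖) :
    Summable fun p : ℤ × ℤ => ‖a p.2 * b (p.1 - p.2)‖ := by
  have h := ha.mul_norm hb
  have := h.comp_injective reidx.injective
  simpa [reidx, Function.comp_def] using this

theorem norm_le_tsum {b : ℤ → ℂ} (hb : Summable fun n => ‖b n‖) (n : ℤ) :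
    ‖b n‖ ≤ ∑' m, ‖b m‖ := Summable.le_tsum hb n (fun _ _ => norm_nonneg _)

theorem summable_conv_at {a b : ℤ → ℂ} (ha : Summable fun n => ‖a n‖)
    (hb : Summable fun n => ‖b n‖) (n : ℤ) :
    Summable fun k => ‖a k * b (n - k)‖ := by
  refine Summable.of_nonneg_of_le (fun k => norm_nonneg _) (fun k => ?_)
    (ha.mul_right (∑' m, ‖b m‖))
  rw [norm_mul]
  exact mul_le_mul_of_nonneg_left (norm_le_tsum hb _) (norm_nonneg _)

theorem summable_norm_conv {a b : ℤ → ℂ} (ha : Summable fun n => ‖a n‖)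
    (hb : Summable fun n => ‖b n‖) :
    Summable fun n => ‖conv a b n‖ := by
  have h := summable_conv_norm ha hb
  have h2 : Summable fun n : ℤ => ∑' k : ℤ, ‖a k * b (n - k)‖ :=
    ((summable_prod_of_nonneg (fun p => norm_nonneg _)).mp h).2
  refine Summable.of_nonneg_of_le (fun n => norm_nonneg _) (fun n => ?_) h2
  exact norm_tsum_le_tsum_norm (summable_conv_at ha hb n)


/-- Cauchy product: key multiplicativity identity. z-evaluation. -/
theorem tsum_conv_mul {a b : ℤ → ℂ} (ha : Summable fun n => ‖a n‖)
    (hb : Summable fun n => ‖b n‖) (g : ℤ → ℂ) (hg : ∀ m n : ℤ, g (m + n) = g m * g n)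
    (hgn : ∀ n, ‖g n‖ = 1) :
    (∑' n, conv a b n * g n) = (∑' n, a n * g n) * (∑' n, b n * g n) := by
  have ha' : Summable fun n => ‖a n * g n‖ := by simpa [hgn] using ha
  have hb' : Summable fun n => ‖b n * g n‖ := by simpa [hgn] using hb
  rw [tsum_mul_tsum_of_summable_norm ha' hb']
  have hprod : Summable fun p : ℤ × ℤ => ‖a p.2 * b (p.1 - p.2) * g p.1‖ := by
    simpa [hgn] using summable_conv_norm ha hb
  have hsum := Summable.tsum_prod (hprod.of_norm)
  have step1 : (∑' (n : ℤ), conv a b n * g n) = ∑' (p : ℤ × ℤ), a p.2 * b (p.1 - p.2) * g p.1 := by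
    rw [hsum]
    congr 1; ext n
    simp only [conv]
    rw [← tsum_mul_right]
  rw [step1, ← (Equiv.tsum_eq reidx.symm fun p : ℤ × ℤ => a p.2 * b (p.1 - p.2) * g p.1)]
  have hprod2 : Summable fun p : ℤ × ℤ => a p.1 * g p.1 * (b p.2 * g p.2) := by
    apply Summable.of_norm
    simpa [hgn, mul_comm, mul_left_comm, mul_assoc] using ha.mul_norm hb
  congr 1; ext p
  simp only [reidx, Equiv.coe_fn_symm_mk, add_sub_cancel_left]
  rw [hg p.1 p.2]; ring


theorem conv_comm {a b : ℤ → ℂ} (n : ℤ) : conv a b n = conv b a n := by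
  simp only [conv]
  rw [← Equiv.tsum_eq (Equiv.subLeft n) fun k => b k * a (n - k)]
  simp [mul_comm]

theorem conv_add {a b c : ℤ → ℂ} (ha : Summable fun n => ‖a n‖)
    (hb : Summable fun n => ‖b n‖) (hc : Summable fun n => ‖c n‖) (n : ℤ) :
    conv a (b + c) n = conv a b n + conv a c n := by
  simp only [conv, Pi.add_apply, mul_add]
  exact Summable.tsum_add ((summable_conv_at ha hb n).of_norm) ((summable_conv_at ha hc n).of_norm)

def one' : ℤ → ℂ := fun n => if n = 0 then 1 else 0

theorem summable_one' : Summable fun n => ‖one' n‖ := by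
  apply summable_of_ne_finset_zero (s := {(0:ℤ)})
  intro n hn
  simp only [Finset.mem_singleton] at hn
  simp [one', hn]

theorem conv_one {a : ℤ → ℂ} (n : ℤ) : conv a one' n = a n := by
  simp only [conv]
  rw [tsum_eq_single n]
  · simp [one']
  · intro k hk
    have : n - k ≠ 0 := sub_ne_zero.mpr (Ne.symm hk)
    simp [one', this]

theorem one_conv {b : ℤ → ℂ} (n : ℤ) : conv one' b n = b n := by
  rw [conv_comm, conv_one]

theorem conv_smul {a b : ℤ → ℂ} (z : ℂ) (n : ℤ) :
    conv (z • a) b n = z * conv a b n := by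
  simp only [conv, Pi.smul_apply, smul_eq_mul, mul_assoc]
  exact tsum_mul_left

theorem conv_assoc {a b c : ℤ → ℂ} (ha : Summable fun n => ‖a n‖)
    (hb : Summable fun n => ‖b n‖) (hc : Summable fun n => ‖c n‖) (n : ℤ) :
    conv (conv a b) c n = conv a (conv b c) n := by
  classical
  have H1 : Summable fun p : ℤ × ℤ => ‖a p.2 * b (p.1 - p.2) * c (n - p.1)‖ := by
    refine Summable.of_nonneg_of_le (fun p => norm_nonneg _) (fun p => ?_)
      ((summable_conv_norm ha hb).mul_right (∑' m, ‖c m‖))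
    rw [norm_mul]
    exact mul_le_mul_of_nonneg_left (norm_le_tsum hc _) (norm_nonneg _)
  have H2 : Summable fun p : ℤ × ℤ => ‖a p.1 * b p.2 * c (n - p.1 - p.2)‖ := by
    have h := H1.comp_injective reidx.symm.injective
    refine h.congr fun p => ?_
    simp [reidx, Function.comp, sub_sub]
  have lhs : conv (conv a b) c n = ∑' p : ℤ × ℤ, a p.2 * b (p.1 - p.2) * c (n - p.1) := by
    rw [Summable.tsum_prod H1.of_norm]
    simp only [conv]
    congr 1; ext m
    rw [← tsum_mul_right]
  have rhs : conv a (conv b c) n = ∑' p : ℤ × ℤ, a p.1 * b p.2 * c (n - p.1 - p.2) := by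
    rw [Summable.tsum_prod H2.of_norm]
    simp only [conv]
    congr 1; ext k
    rw [← tsum_mul_left]
    congr 1; ext m
    rw [sub_sub]; ring
  rw [lhs, rhs, ← Equiv.tsum_eq reidx.symm fun p : ℤ × ℤ => a p.2 * b (p.1 - p.2) * c (n - p.1)]
  congr 1; ext p
  simp [reidx, add_sub_cancel_left, sub_sub]

theorem tsum_norm_conv_le {a b : ℤ → ℂ} (ha : Summable fun n => ‖a n‖)
    (hb : Summable fun n => ‖b n‖) :
    (∑' n, ‖conv a b n‖) ≤ (∑' n, ‖a n‖) * ∑' n, ‖b n‖ := by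
  have h := summable_conv_norm ha hb
  have h2 : Summable fun n : ℤ => ∑' k : ℤ, ‖a k * b (n - k)‖ :=
    ((summable_prod_of_nonneg (fun p => norm_nonneg _)).mp h).2
  calc (∑' n, ‖conv a b n‖) ≤ ∑' (n : ℤ) (k : ℤ), ‖a k * b (n - k)‖ := by
        refine Summable.tsum_le_tsum (fun n => norm_tsum_le_tsum_norm (summable_conv_at ha hb n))
          (summable_norm_conv ha hb) h2
    _ = ∑' p : ℤ × ℤ, ‖a p.2 * b (p.1 - p.2)‖ := (Summable.tsum_prod h).symm
    _ = ∑' p : ℤ × ℤ, ‖a p.1‖ * ‖b p.2‖ := by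
        rw [← Equiv.tsum_eq reidx.symm fun p : ℤ × ℤ => ‖a p.2 * b (p.1 - p.2)‖]
        congr 1; ext p
        simp [reidx, add_sub_cancel_left]
    _ = (∑' n, ‖a n‖) * ∑' n, ‖b n‖ :=
        (Summable.tsum_mul_tsum ha hb (by simpa [norm_mul] using ha.mul_norm hb)).symm


abbrev A : Type := lp (fun _ : ℤ => ℂ) 1

instance : Fact ((1:ENNReal) ≤ 1) := ⟨le_refl _⟩

theorem A.summable (a : A) : Summable fun n : ℤ => ‖a n‖ := by
  have := (lp.memℓp a).summable (p := 1) (by norm_num)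
  simpa using this

theorem A.memℓp {a : ℤ → ℂ} (h : Summable fun n => ‖a n‖) : Memℓp a 1 := by
  apply memℓp_gen
  simpa using h

theorem A.norm_eq (a : A) : ‖a‖ = ∑' n, ‖a n‖ := by
  have := lp.norm_eq_tsum_rpow (p := 1) (by norm_num) a
  simpa using this

instance : Mul A :=
  ⟨fun a b => ⟨conv a b, A.memℓp (summable_norm_conv a.summable b.summable)⟩⟩

theorem A.mul_apply (a b : A) (n : ℤ) : (a * b) n = conv (⇑a) (⇑b) n := rfl

instance : One A := ⟨⟨one', A.memℓp summable_one'⟩⟩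

theorem A.one_apply (n : ℤ) : (1 : A) n = one' n := rfl

instance commRingA : CommRing A :=
  { (inferInstance : AddCommGroup A) with
    mul := (· * ·)
    one := 1
    mul_assoc := fun a b c => lp.ext <| funext fun n => by
      simp only [A.mul_apply]
      rw [show conv (⇑(a * b)) (⇑c) n = conv (conv ⇑a ⇑b) ⇑c n from by
            unfold conv; rfl,
          show conv (⇑a) (⇑(b * c)) n = conv ⇑a (conv ⇑b ⇑c) n from by
            unfold conv; rfl]
      exact conv_assoc a.summable b.summable c.summable n
    one_mul := fun a => lp.ext <| funext fun n => by
      exact one_conv (b := ⇑a) n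
    mul_one := fun a => lp.ext <| funext fun n => by
      exact conv_one (a := ⇑a) n
    left_distrib := fun a b c => lp.ext <| funext fun n => by
      simp only [A.mul_apply, lp.coeFn_add, Pi.add_apply]
      exact conv_add a.summable b.summable c.summable n
    right_distrib := fun a b c => lp.ext <| funext fun n => by
      simp only [A.mul_apply, lp.coeFn_add, Pi.add_apply]
      rw [conv_comm (a := ⇑a + ⇑b), conv_comm (a := ⇑a) (b := ⇑c),
          conv_comm (a := ⇑b) (b := ⇑c)]
      exact conv_add c.summable a.summable b.summable n
    zero_mul := fun a => lp.ext <| funext fun n => by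
      simp [A.mul_apply, conv, lp.coeFn_zero]
    mul_zero := fun a => lp.ext <| funext fun n => by
      simp [A.mul_apply, conv, lp.coeFn_zero]
    mul_comm := fun a b => lp.ext <| funext fun n => by
      simpa [A.mul_apply] using conv_comm (a := ⇑a) (b := ⇑b) n }

instance normedCommRingA : NormedCommRing A :=
  { commRingA, (inferInstance : NormedAddCommGroup A) with
    dist_eq := fun a b => by rw [dist_eq_norm, neg_add_eq_sub, norm_sub_rev]
    norm_mul_le := fun a b => by
      rw [A.norm_eq, A.norm_eq, A.norm_eq]
      exact tsum_norm_conv_le a.summable b.summable }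

instance algebraA : Algebra ℂ A :=
  Algebra.ofModule
    (fun z a b => lp.ext <| funext fun n => by
      simp only [A.mul_apply, lp.coeFn_smul, Pi.smul_apply, smul_eq_mul]
      exact conv_smul z n)
    (fun z a b => lp.ext <| funext fun n => by
      simp only [A.mul_apply, lp.coeFn_smul, Pi.smul_apply, smul_eq_mul]
      rw [conv_comm (a := ⇑a), conv_comm (a := ⇑a) (b := ⇑b)]
      exact conv_smul z n)

instance : NormedAlgebra ℂ A :=
  { algebraA with norm_smul_le := fun r x => norm_smul_le r x }

theorem A.norm_one : ‖(1 : A)‖ = 1 := by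
  rw [A.norm_eq]
  rw [tsum_eq_single 0]
  · simp [A.one_apply, one']
  · intro k hk; simp [A.one_apply, one', hk]

instance : NormOneClass A := ⟨A.norm_one⟩


def delta (j : ℤ) : A := lp.single 1 j 1

theorem delta_apply (j k : ℤ) : delta j k = if k = j then 1 else 0 := by
  by_cases h : k = j
  · subst h; simp [delta, lp.single_apply_self]
  · simp [delta, lp.single_apply_ne _ _ _ h, h]

theorem delta_mul (i j : ℤ) : delta i * delta j = delta (i + j) := by
  refine lp.ext (funext fun n => ?_)
  rw [A.mul_apply, conv, tsum_eq_single i]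
  · rw [delta_apply, if_pos rfl, one_mul, delta_apply, delta_apply]
    congr 1
    simp only [eq_iff_iff]
    omega
  · intro k hk
    rw [delta_apply, if_neg hk, zero_mul]

theorem delta_zero : delta 0 = 1 := by
  refine lp.ext (funext fun n => ?_)
  rw [delta_apply, A.one_apply, one']

theorem norm_delta (j : ℤ) : ‖delta j‖ = 1 := by
  have := lp.norm_single (E := fun _ : ℤ => ℂ) (p := 1) (by norm_num)
    j (1 : ℂ)
  simpa [delta] using this

open WeakDual in
theorem char_delta_one_ne_zero (F : characterSpace ℂ A) : F (delta 1) ≠ 0 := by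
  intro h
  have h1 : F (delta 1) * F (delta (-1)) = 1 := by
    rw [← map_mul, delta_mul]
    norm_num [delta_zero]
  rw [h, zero_mul] at h1
  exact zero_ne_one h1

open WeakDual in
theorem char_delta_inv (F : characterSpace ℂ A) :
    F (delta (-1)) = (F (delta 1))⁻¹ := by
  have h1 : F (delta 1) * F (delta (-1)) = 1 := by
    rw [← map_mul, delta_mul]; norm_num [delta_zero]
  field_simp [char_delta_one_ne_zero F]
  linear_combination h1

theorem delta_natCast (n : ℕ) : delta (n : ℤ) = (delta 1) ^ n := by
  induction n with
  | zero => simpa using delta_zero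
  | succ k ih => rw [pow_succ, ← ih, delta_mul]; norm_num

theorem delta_neg_natCast (n : ℕ) : delta (-(n : ℤ)) = (delta (-1)) ^ n := by
  induction n with
  | zero => simpa using delta_zero
  | succ k ih =>
    rw [pow_succ, ← ih, delta_mul]
    congr 1
    push_cast
    ring

open WeakDual in
theorem char_delta (F : characterSpace ℂ A) (j : ℤ) :
    F (delta j) = (F (delta 1)) ^ j := by
  obtain ⟨n, rfl | rfl⟩ := j.eq_nat_or_neg
  · rw [delta_natCast, map_pow, zpow_natCast]
  · rw [delta_neg_natCast, map_pow, char_delta_inv, ← zpow_natCast, inv_zpow, ← zpow_neg]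

open WeakDual in
theorem char_norm_delta_one (F : characterSpace ℂ A) : ‖F (delta 1)‖ = 1 := by
  have hb : ∀ j : ℤ, ‖F (delta j)‖ ≤ 1 := fun j => by
    have := spectrum.norm_le_norm_of_mem
      (WeakDual.CharacterSpace.apply_mem_spectrum F (delta j))
    simpa [norm_delta] using this
  have h1 := hb 1
  have h2 := hb (-1)
  rw [char_delta_inv, norm_inv] at h2
  have hne : F (delta 1) ≠ 0 := char_delta_one_ne_zero F
  have hpos : 0 < ‖F (delta 1)‖ := norm_pos_iff.mpr hne
  have : 1 ≤ ‖F (delta 1)‖ := by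
    rw [inv_le_one_iff₀] at h2
    rcases h2 with h | h
    · exfalso; linarith
    · exact h
  linarith

open WeakDual in
theorem char_eval (F : characterSpace ℂ A) (a : A) :
    F a = ∑' j : ℤ, a j * (F (delta 1)) ^ j := by
  have hs : HasSum (fun j : ℤ => lp.single 1 j (a j)) a :=
    lp.hasSum_single (by norm_num) a
  have hFs : HasSum (fun j : ℤ => F (lp.single 1 j (a j))) (F a) :=
    (WeakDual.CharacterSpace.toCLM F).hasSum hs
  have key : ∀ j : ℤ, F (lp.single 1 j (a j)) = a j * (F (delta 1)) ^ j := by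
    intro j
    have : lp.single 1 j (a j) = a j • delta j := by
      rw [delta, ← lp.single_smul]
      norm_num
    rw [this, map_smul, smul_eq_mul, char_delta]
  rw [← hFs.tsum_eq]
  exact tsum_congr key


/-- The evaluation character data: `exp (I n φ)` is multiplicative and unimodular. -/
theorem expg_mul (φ : ℝ) (m n : ℤ) :
    Complex.exp (Complex.I * (↑(m + n) : ℂ) * φ) =
      Complex.exp (Complex.I * m * φ) * Complex.exp (Complex.I * n * φ) := by
  rw [← Complex.exp_add]
  congr 1
  push_cast
  ring

theorem expg_norm (φ : ℝ) (n : ℤ) : ‖Complex.exp (Complex.I * n * φ)‖ = 1 := by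
  rw [show Complex.I * n * φ = ((n * φ : ℝ) : ℂ) * Complex.I by push_cast; ring]
  simpa using Complex.norm_exp_ofReal_mul_I (n * φ)

open WeakDual in
theorem isUnit_of_rep (f : ℝ → ℂ) (c : ℤ → ℂ) (hc : Summable fun n : ℤ => ‖c n‖)
    (hrep : ∀ φ : ℝ, f (1 / 2 * Real.tan (φ / 2)) =
      ∑' n : ℤ, c n * Complex.exp (Complex.I * n * φ))
    (hne : ∀ x : ℝ, f x ≠ 0) : IsUnit (⟨c, A.memℓp hc⟩ : A) := by
  by_contra h
  obtain ⟨F, hF⟩ := WeakDual.CharacterSpace.exists_apply_eq_zero h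
  set lam := F (delta 1) with hlam
  have habs : (‖lam‖ : ℂ) = 1 := by
    have := char_norm_delta_one F
    rw [this]; norm_num
  have hlamexp : lam = Complex.exp ((lam.arg : ℂ) * Complex.I) := by
    conv_lhs => rw [← Complex.norm_mul_exp_arg_mul_I lam]
    rw [habs, one_mul]
  have hlamj : ∀ j : ℤ, lam ^ j = Complex.exp (Complex.I * j * (lam.arg : ℂ)) := by
    intro j
    conv_lhs => rw [hlamexp]
    rw [← Complex.exp_int_mul]
    congr 1
    ring
  have heval := char_eval F ⟨c, A.memℓp hc⟩
  rw [hF] at heval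
  have : (0 : ℂ) = ∑' n : ℤ, c n * Complex.exp (Complex.I * n * (lam.arg : ℂ)) := by
    rw [heval]
    exact tsum_congr fun j => by rw [hlamj]
  rw [← hrep lam.arg] at this
  exact hne _ this.symm

end
end Wiener

open Complex

/-- Wiener's lemma in this setting: if `φ ↦ f((1/2)tan(φ/2))` has an absolutely convergent
Fourier series and `f(x) ≠ 0` for all real `x`, then `φ ↦ 1/f((1/2)tan(φ/2))` also has an
absolutely convergent Fourier series. -/
theorem stmt_6 (f : ℝ → ℂ) (c : ℤ → ℂ) (hc : Summable fun n : ℤ => ‖c n‖)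
    (hrep : ∀ φ : ℝ, f (1 / 2 * Real.tan (φ / 2)) =
      ∑' n : ℤ, c n * Complex.exp (Complex.I * n * φ))
    (hne : ∀ x : ℝ, f x ≠ 0) :
    ∃ d : ℤ → ℂ, Summable (fun n : ℤ => ‖d n‖) ∧
      ∀ φ : ℝ, (f (1 / 2 * Real.tan (φ / 2)))⁻¹ =
        ∑' n : ℤ, d n * Complex.exp (Complex.I * n * φ) := by
  classical
  obtain ⟨b, hb⟩ := (Wiener.isUnit_of_rep f c hc hrep hne).exists_right_inv
  refine ⟨⇑b, Wiener.A.summable b, fun φ => ?_⟩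
  set g : ℤ → ℂ := fun n => Complex.exp (Complex.I * n * φ) with hgdef
  have hkey := Wiener.tsum_conv_mul hc (Wiener.A.summable b) g
    (fun m n => Wiener.expg_mul φ m n) (fun n => Wiener.expg_norm φ n)
  have hconv : Wiener.conv c ⇑b = ⇑((⟨c, Wiener.A.memℓp hc⟩ : Wiener.A) * b) := rfl
  have hone : (∑' n : ℤ, Wiener.conv c (⇑b) n * g n) = 1 := by
    rw [hconv, hb]
    rw [tsum_eq_single 0]
    · simp [Wiener.A.one_apply, Wiener.one', hgdef]
    · intro k hk
      simp [Wiener.A.one_apply, Wiener.one', hk]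
  rw [hone] at hkey
  have hfc : f (1 / 2 * Real.tan (φ / 2)) = ∑' n : ℤ, c n * g n := hrep φ
  rw [hfc]
  exact (inv_eq_of_mul_eq_one_right hkey.symm)
end

section
/- For σ > 1/2, n ∈ ℤ, and the Dirichlet series of ζ, one has (1/(2π)) ∫_{-π}^{π} ζ(σ + (i/2)tan(φ/2)) e^{inφ} dφ = (1/π) ∫_0^π Σ_{k≥1} k^{-σ} cos((1/2)tan(φ/2)·log k − nφ) dφ, where the interchange of sum and integral is justified and the n-th term from k = 1 contributes (1/π)∫_0^π cos(nφ)dφ = δ_{n,0}. -/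
open Complex intervalIntegral

namespace Stmt11Aux

noncomputable def trm (σ : ℝ) (n : ℤ) (k : ℕ) (φ : ℝ) : ℂ :=
  ((((k : ℝ) + 1) ^ (-σ) : ℝ) : ℂ) *
    Complex.exp ((((n : ℝ) * φ - 1 / 2 * Real.tan (φ / 2) * Real.log ((k : ℝ) + 1) : ℝ) : ℂ)
      * Complex.I)

noncomputable def F (σ : ℝ) (n : ℤ) (φ : ℝ) : ℂ := ∑' k : ℕ, trm σ n k φ

lemma measurable_tan : Measurable Real.tan := by
  have : Real.tan = fun x => Real.sin x / Real.cos x := funext fun x => Real.tan_eq_sin_div_cos x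
  rw [this]; exact Real.measurable_sin.div Real.measurable_cos

lemma norm_trm (σ : ℝ) (n : ℤ) (k : ℕ) (φ : ℝ) : ‖trm σ n k φ‖ = ((k : ℝ) + 1) ^ (-σ) := by
  have hk : (0 : ℝ) ≤ ((k : ℝ) + 1) ^ (-σ) := Real.rpow_nonneg (by positivity) _
  rw [trm, norm_mul, Complex.norm_real, Complex.norm_exp_ofReal_mul_I,
    mul_one, Real.norm_eq_abs, _root_.abs_of_nonneg hk]

lemma summable_coef (σ : ℝ) (hσ : 1 < σ) : Summable (fun k : ℕ => ((k : ℝ) + 1) ^ (-σ)) := by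
  have h := Real.summable_nat_rpow (p := -σ) |>.mpr (by linarith)
  exact (h.comp_injective (add_left_injective 1)).congr (fun k => by simp [Function.comp])

lemma summable_trm (σ : ℝ) (hσ : 1 < σ) (n : ℤ) (φ : ℝ) : Summable (fun k => trm σ n k φ) := by
  apply Summable.of_norm
  simpa only [norm_trm] using summable_coef σ hσ

lemma zeta_eq (σ : ℝ) (hσ : 1 < σ) (n : ℤ) (φ : ℝ) :
    riemannZeta (σ + Complex.I / 2 * Real.tan (φ / 2)) * Complex.exp (Complex.I * n * φ)
      = F σ n φ := by
  set T : ℝ := Real.tan (φ / 2) with hT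
  set s : ℂ := (σ : ℂ) + Complex.I / 2 * (T : ℂ) with hs
  have hres : 1 < s.re := by
    simp [hs, Complex.add_re, Complex.mul_re, Complex.div_re]
    linarith
  rw [zeta_eq_tsum_one_div_nat_add_one_cpow hres, ← tsum_mul_right]
  refine tsum_congr fun k => ?_
  have hx : (0 : ℝ) < (k : ℝ) + 1 := by positivity
  have hcast : ((k : ℂ) + 1) = (((k : ℝ) + 1 : ℝ) : ℂ) := by push_cast; ring
  have hne : ((((k : ℝ) + 1 : ℝ)) : ℂ) ≠ 0 := by
    exact_mod_cast hx.ne'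
  rw [hcast, Complex.cpow_def_of_ne_zero hne, ← Complex.ofReal_log hx.le]
  rw [trm, Real.rpow_def_of_pos hx, Complex.ofReal_exp, one_div, ← Complex.exp_neg,
    ← Complex.exp_add, ← Complex.exp_add]
  congr 1
  rw [hs, ← hT]
  simp only [Complex.ofReal_sub, Complex.ofReal_mul, Complex.ofReal_div, Complex.ofReal_one,
    Complex.ofReal_ofNat, Complex.ofReal_neg, Complex.ofReal_intCast]
  ring

lemma re_F (σ : ℝ) (hσ : 1 < σ) (n : ℤ) (φ : ℝ) :
    (F σ n φ).re = ∑' k : ℕ, (((k : ℝ) + 1) ^ (-σ)) *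
      Real.cos (1 / 2 * Real.tan (φ / 2) * Real.log ((k : ℝ) + 1) - (n : ℝ) * φ) := by
  rw [F, Complex.re_tsum (summable_trm σ hσ n φ)]
  refine tsum_congr fun k => ?_
  rw [trm, Complex.re_ofReal_mul, Complex.exp_ofReal_mul_I_re, ← Real.cos_neg, neg_sub]

lemma conj_trm (σ : ℝ) (n : ℤ) (k : ℕ) (φ : ℝ) :
    trm σ n k (-φ) = (starRingEnd ℂ) (trm σ n k φ) := by
  rw [trm, trm, map_mul, Complex.conj_ofReal, ← Complex.exp_conj, map_mul, Complex.conj_ofReal,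
    Complex.conj_I]
  congr 2
  have : Real.tan (-φ / 2) = -Real.tan (φ / 2) := by rw [neg_div, Real.tan_neg]
  push_cast [this]
  ring

lemma conj_F (σ : ℝ) (hσ : 1 < σ) (n : ℤ) (φ : ℝ) :
    F σ n (-φ) = (starRingEnd ℂ) (F σ n φ) := by
  rw [F, F]
  have := ((summable_trm σ hσ n φ).hasSum.map (starRingEnd ℂ) continuous_conj).tsum_eq
  rw [this.symm]
  exact tsum_congr fun k => conj_trm σ n k φ

lemma measurable_F (σ : ℝ) (hσ : 1 < σ) (n : ℤ) : Measurable (F σ n) := by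
  have hterm : ∀ k : ℕ, Measurable (fun φ => trm σ n k φ) := by
    intro k
    apply Measurable.mul measurable_const
    apply Complex.continuous_exp.measurable.comp
    apply Measurable.mul_const _ Complex.I
    apply Complex.measurable_ofReal.comp
    apply Measurable.sub (measurable_const.mul measurable_id)
    exact ((measurable_const.mul ((measurable_tan.comp (measurable_id.div_const 2)))).mul
      measurable_const)
  apply measurable_of_tendsto_metrizable
    (f := fun N φ => ∑ k ∈ Finset.range N, trm σ n k φ)
    (fun N => Finset.measurable_sum _ fun k _ => hterm k)
  rw [tendsto_pi_nhds]
  exact fun φ => (summable_trm σ hσ n φ).hasSum.tendsto_sum_nat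

lemma intInt_F (σ : ℝ) (hσ : 1 < σ) (n : ℤ) (a b : ℝ) :
    IntervalIntegrable (F σ n) MeasureTheory.volume a b := by
  set C : ℝ := ∑' k : ℕ, ((k : ℝ) + 1) ^ (-σ) with hC
  apply IntervalIntegrable.mono_fun' (g := fun _ => C) intervalIntegrable_const
    (measurable_F σ hσ n).aestronglyMeasurable
  refine Filter.Eventually.of_forall fun φ => ?_
  calc ‖F σ n φ‖ ≤ ∑' k : ℕ, ‖trm σ n k φ‖ :=
        norm_tsum_le_tsum_norm (by simpa only [norm_trm] using summable_coef σ hσ)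
    _ = C := by rw [hC]; exact tsum_congr fun k => norm_trm σ n k φ

end Stmt11Aux

open Stmt11Aux

/-- For `σ > 1` (so that the Dirichlet series converges absolutely) and `n ∈ ℤ`,
`(1/(2π)) ∫_{-π}^{π} ζ(σ + (i/2)tan(φ/2)) e^{inφ} dφ
  = (1/π) ∫_0^π Σ_{k≥1} k^{-σ} cos((1/2)tan(φ/2)·log k − nφ) dφ`,
and the `k = 1` term contributes `(1/π)∫_0^π cos(nφ) dφ = δ_{n,0}`. -/
theorem stmt_11 (σ : ℝ) (hσ : 1 < σ) (n : ℤ) :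
    (1 / (2 * Real.pi) : ℂ) *
        ∫ φ in (-Real.pi)..Real.pi,
          riemannZeta (σ + Complex.I / 2 * Real.tan (φ / 2)) *
            Complex.exp (Complex.I * n * φ) =
      ((1 / Real.pi) * ∫ φ in (0 : ℝ)..Real.pi,
        ∑' k : ℕ, ((k + 1 : ℝ) ^ (-σ)) *
          Real.cos (1 / 2 * Real.tan (φ / 2) * Real.log (k + 1) - n * φ) : ℝ) ∧
    ((1 / Real.pi) * ∫ φ in (0 : ℝ)..Real.pi, Real.cos (n * φ)) =
      (if n = 0 then (1 : ℝ) else 0) := by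
  constructor
  · have hcongr : (∫ φ in (-Real.pi)..Real.pi,
        riemannZeta (σ + Complex.I / 2 * Real.tan (φ / 2)) * Complex.exp (Complex.I * n * φ))
        = ∫ φ in (-Real.pi)..Real.pi, F σ n φ :=
      intervalIntegral.integral_congr fun φ _ => zeta_eq σ hσ n φ
    rw [hcongr, ← intervalIntegral.integral_add_adjacent_intervals
      (intInt_F σ hσ n (-Real.pi) 0) (intInt_F σ hσ n 0 Real.pi)]
    have h1 : (∫ φ in (-Real.pi)..(0:ℝ), F σ n φ) = ∫ φ in (0:ℝ)..Real.pi, F σ n (-φ) := by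
      rw [intervalIntegral.integral_comp_neg (fun φ => F σ n φ)]
      norm_num
    have h2 : (∫ φ in (0:ℝ)..Real.pi, F σ n (-φ))
        = (starRingEnd ℂ) (∫ φ in (0:ℝ)..Real.pi, F σ n φ) := by
      simp_rw [conj_F σ hσ n]
      rw [intervalIntegral.integral_of_le Real.pi_pos.le,
        intervalIntegral.integral_of_le Real.pi_pos.le, integral_conj]
    set J : ℂ := ∫ φ in (0:ℝ)..Real.pi, F σ n φ with hJ
    rw [h1, h2]
    have h3 : (starRingEnd ℂ) J + J = ((2 * J.re : ℝ) : ℂ) := by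
      rw [add_comm]; exact Complex.add_conj J
    rw [h3]
    have h4 : J.re = ∫ φ in (0:ℝ)..Real.pi, ∑' k : ℕ, (((k : ℝ) + 1) ^ (-σ)) *
        Real.cos (1 / 2 * Real.tan (φ / 2) * Real.log ((k : ℝ) + 1) - (n : ℝ) * φ) := by
      have hint : MeasureTheory.IntegrableOn (F σ n) (Set.Ioc 0 Real.pi) :=
        (intInt_F σ hσ n 0 Real.pi).1
      rw [hJ, intervalIntegral.integral_of_le Real.pi_pos.le,
        intervalIntegral.integral_of_le Real.pi_pos.le]
      have hre : Complex.re = RCLike.re := rfl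
      rw [hre, ← integral_re hint]
      refine MeasureTheory.integral_congr_ae (Filter.Eventually.of_forall fun φ => ?_)
      exact re_F σ hσ n φ
    rw [h4]
    push_cast
    have hπ : (Real.pi : ℂ) ≠ 0 := Complex.ofReal_ne_zero.mpr Real.pi_ne_zero
    field_simp
    ring
    congr 1
    refine intervalIntegral.integral_congr fun φ _ => ?_
    simp only [mul_comm φ (n : ℝ)]
  · by_cases hn : n = 0
    · subst hn
      simp [Real.pi_ne_zero]
    · have hc : ((n : ℝ)) ≠ 0 := Int.cast_ne_zero.mpr hn
      rw [intervalIntegral.integral_comp_mul_left (fun x => Real.cos x) hc]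
      simp [integral_cos, Real.sin_int_mul_pi, hn]
end
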